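/- Let Σ₀ and Σ₁ be symmetric positive definite real n×n matrices. Then M = Σ₀^{-1/2} (Σ₀^{1/2} Σ₁ Σ₀^{1/2})^{1/2} Σ₀^{-1/2} is the unique symmetric positive definite real n×n matrix satisfying M Σ₀ M = Σ₁; that is, M is positive definite, M Σ₀ M = Σ₁, and any positive definite N with N Σ₀ N = Σ₁ equals M. -/

import Mathlib

open Matrix
open scoped Classical

/-- The positive semidefinite square root of a matrix, extended by `0` to
matrices that are not positive semidefinite.  For a positive definite matrix
`S`, `psqrt S` is the unique positive definite square root `S^{1/2}` of `S`. -/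
noncomputable def psqrt {n : ℕ} (S : Matrix (Fin n) (Fin n) ℝ) :
    Matrix (Fin n) (Fin n) ℝ :=
  if h : S.PosSemidef then
    (h.1.eigenvectorUnitary : Matrix (Fin n) (Fin n) ℝ) *
      diagonal ((↑) ∘ (Real.sqrt ∘ h.1.eigenvalues)) *
      (star h.1.eigenvectorUnitary : Matrix (Fin n) (Fin n) ℝ)
  else 0

open scoped MatrixOrder in
lemma aux_psqrt_eq {n : ℕ} {S : Matrix (Fin n) (Fin n) ℝ} (hS : S.PosSemidef) :
    psqrt S = CFC.sqrt S := by
  rw [psqrt, dif_pos hS, CFC.sqrt_eq_cfc, cfc_nnreal_eq_real _ S, hS.1.cfc_eq,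
    IsHermitian.cfc, Unitary.conjStarAlgAut_apply]
  congr 2
  congr 1
  funext i
  simp [Real.coe_sqrt, Real.coe_toNNReal', max_eq_left (hS.eigenvalues_nonneg i)]

lemma aux_conj_posDef {n : ℕ} {B C : Matrix (Fin n) (Fin n) ℝ}
    (hB : B.PosDef) (hC : IsUnit C) : (Cᴴ * B * C).PosDef := by
  refine Matrix.PosDef.of_dotProduct_mulVec_pos
    (Matrix.isHermitian_conjTranspose_mul_mul C hB.1) fun x hx => ?_
  have hCx : C *ᵥ x ≠ 0 := fun h =>
    hx ((Matrix.mulVec_injective_iff_isUnit.mpr hC) (by simpa using h))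
  have := hB.dotProduct_mulVec_pos hCx
  rwa [star_mulVec, ← dotProduct_mulVec, Matrix.mulVec_mulVec,
    Matrix.mulVec_mulVec] at this

lemma aux_posDef_of_posSemidef_isUnit {n : ℕ} {A : Matrix (Fin n) (Fin n) ℝ}
    (hA : A.PosSemidef) (hU : IsUnit A) : A.PosDef := by
  obtain ⟨B, rfl⟩ : ∃ B : Matrix (Fin n) (Fin n) ℝ, A = Bᵀ * B := by
    open scoped MatrixOrder in
    obtain ⟨B, hB⟩ := CStarAlgebra.nonneg_iff_eq_star_mul_self.mp hA.nonneg
    exact ⟨B, hB⟩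
  have hB : IsUnit B := by
    have := (Matrix.isUnit_iff_isUnit_det _).mp hU
    rw [Matrix.det_mul] at this
    exact (Matrix.isUnit_iff_isUnit_det _).mpr (isUnit_of_mul_isUnit_right this)
  refine Matrix.PosDef.of_dotProduct_mulVec_pos hA.1 fun x hx => ?_
  have hBx : B *ᵥ x ≠ 0 := fun h =>
    hx ((Matrix.mulVec_injective_iff_isUnit.mpr hB) (by simpa using h))
  have : (0 : ℝ) < star (B *ᵥ x) ⬝ᵥ (B *ᵥ x) :=
    Matrix.dotProduct_star_self_pos_iff.mpr hBx
  rwa [star_mulVec, ← dotProduct_mulVec, Matrix.mulVec_mulVec] at this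

open scoped MatrixOrder in
lemma aux_psqrt_posDef {n : ℕ} {S : Matrix (Fin n) (Fin n) ℝ} (hS : S.PosDef) :
    (psqrt S).PosDef ∧ psqrt S * psqrt S = S := by
  have hps : S.PosSemidef := hS.posSemidef
  have hdef : psqrt S = CFC.sqrt S := aux_psqrt_eq hps
  have hsq : psqrt S * psqrt S = S := by rw [hdef]; exact CFC.sqrt_mul_sqrt_self S hps.nonneg
  have hpsd : (psqrt S).PosSemidef := hdef ▸ (CFC.sqrt_nonneg S).posSemidef
  refine ⟨aux_posDef_of_posSemidef_isUnit hpsd ?_, hsq⟩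
  rw [Matrix.isUnit_iff_isUnit_det]
  have : (psqrt S).det * (psqrt S).det = S.det := by rw [← Matrix.det_mul, hsq]
  exact isUnit_of_mul_isUnit_right (this ▸ hS.det_pos.ne'.isUnit)

open scoped MatrixOrder in
/-- Let `S₀, S₁` be symmetric positive definite real `n × n` matrices.  Then
`M = S₀^{-1/2} (S₀^{1/2} S₁ S₀^{1/2})^{1/2} S₀^{-1/2}` is the unique symmetric
positive definite matrix with `M S₀ M = S₁`.  (`M` is the optimal transport
(Monge) map between centered Gaussians with covariances `S₀` and `S₁`.) -/
theorem optimal_transport_map_unique {n : ℕ} (S₀ S₁ : Matrix (Fin n) (Fin n) ℝ)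
    (h₀ : S₀.PosDef) (h₁ : S₁.PosDef) :
    ((psqrt S₀)⁻¹ * psqrt (psqrt S₀ * S₁ * psqrt S₀) * (psqrt S₀)⁻¹).PosDef ∧
    ((psqrt S₀)⁻¹ * psqrt (psqrt S₀ * S₁ * psqrt S₀) * (psqrt S₀)⁻¹) * S₀ *
      ((psqrt S₀)⁻¹ * psqrt (psqrt S₀ * S₁ * psqrt S₀) * (psqrt S₀)⁻¹) = S₁ ∧
    ∀ N : Matrix (Fin n) (Fin n) ℝ, N.PosDef → N * S₀ * N = S₁ →
      N = (psqrt S₀)⁻¹ * psqrt (psqrt S₀ * S₁ * psqrt S₀) * (psqrt S₀)⁻¹ := by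
  obtain ⟨hA, hAA⟩ := aux_psqrt_posDef h₀
  set A := psqrt S₀ with hAdef
  have hAH : Aᴴ = A := hA.1
  haveI : Invertible A := hA.isUnit.invertible
  have h1 : A * A⁻¹ = 1 := Matrix.mul_inv_of_invertible A
  have h2 : A⁻¹ * A = 1 := Matrix.inv_mul_of_invertible A
  have hconj : ∀ X : Matrix (Fin n) (Fin n) ℝ, A⁻¹ * (A * X * A) * A⁻¹ = X := by
    intro X
    calc A⁻¹ * (A * X * A) * A⁻¹ = (A⁻¹ * A) * X * (A * A⁻¹) := by
          simp only [Matrix.mul_assoc]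
      _ = X := by rw [h2, h1, Matrix.one_mul, Matrix.mul_one]
  have hT : (A * S₁ * A).PosDef := by
    have := aux_conj_posDef h₁ hA.isUnit
    rwa [hAH] at this
  obtain ⟨hB, hBB⟩ := aux_psqrt_posDef hT
  set B := psqrt (A * S₁ * A) with hBdef
  have hAinvH : (A⁻¹)ᴴ = A⁻¹ := hA.inv.1
  have hM : (A⁻¹ * B * A⁻¹).PosDef := by
    have := aux_conj_posDef hB hA.inv.isUnit
    rwa [hAinvH] at this
  have key : (A⁻¹ * B * A⁻¹) * S₀ * (A⁻¹ * B * A⁻¹) = S₁ := by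
    rw [← hAA]
    calc A⁻¹ * B * A⁻¹ * (A * A) * (A⁻¹ * B * A⁻¹)
        = A⁻¹ * (B * ((A⁻¹ * A) * (A * A⁻¹)) * B) * A⁻¹ := by
          simp only [Matrix.mul_assoc]
      _ = A⁻¹ * (B * B) * A⁻¹ := by
          rw [h2, h1, Matrix.one_mul, Matrix.mul_one]
      _ = S₁ := by rw [hBB, hconj]
  refine ⟨hM, key, fun N hN hNeq => ?_⟩
  have hK : (A * N * A).PosDef := by
    have := aux_conj_posDef hN hA.isUnit
    rwa [hAH] at this
  have hKsq : (A * N * A) ^ 2 = A * S₁ * A := by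
    have hmid : N * (A * A) * N = S₁ := by rw [hAA, hNeq]
    calc (A * N * A) ^ 2 = A * (N * (A * A) * N) * A := by
          rw [sq]; simp only [Matrix.mul_assoc]
      _ = A * S₁ * A := by rw [hmid]
  have hKB : A * N * A = B := by
    have := (CFC.sqrt_unique (a := A * S₁ * A) (by rw [← sq]; exact hKsq) hK.posSemidef.nonneg).symm
    rw [this, hBdef, aux_psqrt_eq hT.posSemidef]
  rw [← hconj N, hKB]
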